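/- Let 0 ≤ ε < 2 and let (ξ, η) : ℝ → ℝ² be a differentiable solution of the reduced Pikovsky–Topaj system. Then the function t ↦ (π − ξ(t − π), π + η(t − π)) is also a solution of the same system. In other words, the system is invariant under the coordinate change σ : (ξ, η) ↦ (π − ξ, π + η) combined with the time shift t ↦ t + π (the time-shift symmetry). -/

import Mathlib

open Real

/-- `(ξ, η)` is a solution of the reduced (nonautonomous) Pikovsky–Topaj system
`ξ' = 2ε sin ξ sin η / (2 + ε cos(t − η))`,
`η' = (1 - ε cos(t − η) − 2ε cos ξ cos η) / (2 + ε cos(t − η))`. -/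
def IsReducedPTSol (ε : ℝ) (ξ η : ℝ → ℝ) : Prop :=
  ∀ t : ℝ,
    HasDerivAt ξ
      (2 * ε * Real.sin (ξ t) * Real.sin (η t) / (2 + ε * Real.cos (t - η t))) t ∧
    HasDerivAt η
      ((1 - ε * Real.cos (t - η t) - 2 * ε * Real.cos (ξ t) * Real.cos (η t)) /
        (2 + ε * Real.cos (t - η t))) t

/-- The reduced Pikovsky–Topaj system is invariant under the coordinate change
`σ : (ξ, η) ↦ (π − ξ, π + η)` combined with the time shift `t ↦ t + π`. -/
theorem reducedPT_timeShiftSymmetry (ε : ℝ) (hε₀ : 0 ≤ ε) (hε₂ : ε < 2) (ξ η : ℝ → ℝ)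
    (h : IsReducedPTSol ε ξ η) :
    IsReducedPTSol ε (fun t => Real.pi - ξ (t - Real.pi))
      (fun t => Real.pi + η (t - Real.pi)) := by
  intro t
  obtain ⟨h1, h2⟩ := h (t - Real.pi)
  have hshift : HasDerivAt (fun s : ℝ => s - Real.pi) 1 t :=
    (hasDerivAt_id t).sub_const _
  have H1 := (h1.comp t hshift).const_sub Real.pi
  have H2 := (h2.comp t hshift).const_add Real.pi
  have harg : t - (Real.pi + η (t - Real.pi)) = (t - Real.pi) - η (t - Real.pi) := by ring
  constructor
  · refine H1.congr_deriv ?_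
    simp only [harg, Real.sin_pi_sub, add_comm Real.pi, Real.sin_add_pi, mul_one]
    rw [← neg_div]
    ring_nf
  · refine H2.congr_deriv ?_
    simp only [harg, Real.cos_pi_sub, add_comm Real.pi, Real.cos_add_pi, mul_one]
    ring_nf
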